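/- Let a ∈ ℚ with v_2(a) = 1, c = -1 + a - a², f(x) = x² + c. Then v_2(f^n(0) - a) = 2 for all even n ≥ 2 and v_2(f^n(0) - a) = 0 for all odd n ≥ 1. -/

import Mathlib

private lemma norm_two' : ‖(2 : ℚ_[2])‖ = 1/2 := by
  have := Padic.norm_p (p := 2)
  rw [show ((2:ℕ) : ℚ_[2]) = (2 : ℚ_[2]) by norm_num] at this
  rw [this]; norm_num

private lemma val_of_norm (d : ℚ) (m : ℤ) (h : ‖(d : ℚ_[2])‖ = (2:ℝ)^(-m)) :
    d ≠ 0 ∧ padicValRat 2 d = m := by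
  have hpos : (0:ℝ) < (2:ℝ)^(-m) := zpow_pos (by norm_num) _
  have hd : d ≠ 0 := by
    rintro rfl
    rw [Rat.cast_zero, norm_zero] at h
    linarith
  refine ⟨hd, ?_⟩
  rw [Padic.eq_padicNorm, padicNorm.eq_zpow_of_nonzero hd] at h
  have h2 : (2:ℝ) ^ (-padicValRat 2 d) = (2:ℝ)^(-m) := by
    push_cast at h; convert h using 2 <;> norm_num
  have := zpow_right_injective₀ (a := (2:ℝ)) (by norm_num) (by norm_num) h2
  omega

section steps

private lemma step1 (A : ℚ_[2]) (hA : ‖A‖ = 1/2) (x : ℚ_[2]) (h : ‖x + 1‖ ≤ 1/4) :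
    ‖(x^2 + 2*A*x - 1) + 2*A‖ ≤ 1/8 := by
  have he : (x^2 + 2*A*x - 1) + 2*A = (x + 1) * ((x + 1) + (2*A - 2)) := by ring
  have h1 : ‖2*A - 2‖ ≤ 1/2 := by
    have : (2*A - 2 : ℚ_[2]) = 2 * (A - 1) := by ring
    rw [this, norm_mul, norm_two']
    have hA1 : ‖A - 1‖ ≤ 1 := by
      have e : A - 1 = A + (-1) := by ring
      rw [e]
      refine le_trans (Padic.nonarchimedean _ _) (max_le ?_ ?_)
      · rw [hA]; norm_num
      · simp
    nlinarith [norm_nonneg (A - 1)]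
  have h2 : ‖(x + 1) + (2*A - 2)‖ ≤ 1/2 :=
    le_trans (Padic.nonarchimedean _ _) (max_le (by linarith) h1)
  rw [he, norm_mul]
  nlinarith [norm_nonneg (x+1), norm_nonneg ((x+1)+(2*A-2))]

private lemma step2 (A : ℚ_[2]) (hA : ‖A‖ = 1/2) (y : ℚ_[2]) (h : ‖y + 2*A‖ ≤ 1/8) :
    ‖(y^2 + 2*A*y - 1) + 1‖ ≤ 1/4 := by
  have he : (y^2 + 2*A*y - 1) + 1 = y * (y + 2*A) := by ring
  have h2A : ‖2*A‖ = 1/4 := by rw [norm_mul, norm_two', hA]; norm_num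
  have hy : ‖y‖ ≤ 1/4 := by
    have : y = (y + 2*A) + (-(2*A)) := by ring
    rw [this]
    refine le_trans (Padic.nonarchimedean _ _) (max_le (by linarith) ?_)
    rw [norm_neg, h2A]
  rw [he, norm_mul]
  nlinarith [norm_nonneg y, norm_nonneg (y + 2*A)]

private lemma final_odd (x : ℚ_[2]) (h : ‖x + 1‖ ≤ 1/4) : ‖x‖ = 1 := by
  have : x = (x + 1) + (-1) := by ring
  rw [this, Padic.add_eq_max_of_ne (by rw [norm_neg, norm_one]; linarith),
    norm_neg, norm_one]
  exact max_eq_right (by linarith)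

private lemma final_even (A : ℚ_[2]) (hA : ‖A‖ = 1/2) (y : ℚ_[2]) (h : ‖y + 2*A‖ ≤ 1/8) : ‖y‖ = 1/4 := by
  have h2A : ‖2*A‖ = 1/4 := by rw [norm_mul, norm_two', hA]; norm_num
  have : y = (y + 2*A) + (-(2*A)) := by ring
  rw [this, Padic.add_eq_max_of_ne (by rw [norm_neg, h2A]; linarith),
    norm_neg, h2A]
  exact max_eq_right (by linarith)

end steps

theorem stmt18 (a : ℚ) (ha : a ≠ 0) (hv : padicValRat 2 a = 1)
    (c : ℚ) (hc : c = -1 + a - a^2) (f : ℚ → ℚ) (hf : ∀ x, f x = x^2 + c) :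
    (∀ n : ℕ, 2 ≤ n → Even n → f^[n] 0 - a ≠ 0 ∧ padicValRat 2 (f^[n] 0 - a) = 2) ∧
    (∀ n : ℕ, 1 ≤ n → Odd n → f^[n] 0 - a ≠ 0 ∧ padicValRat 2 (f^[n] 0 - a) = 0) := by
  have hA : ‖((a : ℚ) : ℚ_[2])‖ = 1/2 := by
    rw [Padic.eq_padicNorm, padicNorm.eq_zpow_of_nonzero ha, hv]
    norm_num
  set A : ℚ_[2] := ((a : ℚ) : ℚ_[2]) with hAdef
  have hrec : ∀ n : ℕ, ((f^[n+1] 0 - a : ℚ) : ℚ_[2]) =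
      ((f^[n] 0 - a : ℚ) : ℚ_[2])^2 + 2*A*((f^[n] 0 - a : ℚ) : ℚ_[2]) - 1 := by
    intro n
    have h1 : f^[n+1] 0 = f (f^[n] 0) := Function.iterate_succ_apply' f n 0
    have h2 : (f^[n+1] 0 - a : ℚ) = (f^[n] 0 - a)^2 + 2*a*(f^[n] 0 - a) - 1 := by
      rw [h1, hf, hc]; ring
    rw [h2]; push_cast; ring
  -- the invariant
  have key : ∀ m : ℕ, ‖((f^[2*m+1] 0 - a : ℚ) : ℚ_[2]) + 1‖ ≤ 1/4 ∧
      ‖((f^[2*m+2] 0 - a : ℚ) : ℚ_[2]) + 2*A‖ ≤ 1/8 := by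
    intro m
    induction m with
    | zero =>
      have hbase : ‖((f^[1] 0 - a : ℚ) : ℚ_[2]) + 1‖ ≤ 1/4 := by
        have h1 : (f^[1] 0 - a : ℚ) = -1 - a^2 + a - a := by
          simp [hf, hc]; ring
        have h2 : ((f^[1] 0 - a : ℚ) : ℚ_[2]) + 1 = -(A*A) := by
          rw [h1]; push_cast; ring
        rw [h2, norm_neg, norm_mul, hA]; norm_num
      refine ⟨hbase, ?_⟩
      rw [hrec 1]
      exact step1 A hA _ hbase
    | succ k ih =>
      have hodd : ‖((f^[2*(k+1)+1] 0 - a : ℚ) : ℚ_[2]) + 1‖ ≤ 1/4 := by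
        have : 2*(k+1)+1 = (2*k+2)+1 := by ring
        rw [this, hrec (2*k+2)]
        exact step2 A hA _ ih.2
      refine ⟨hodd, ?_⟩
      rw [hrec (2*(k+1)+1)]
      exact step1 A hA _ hodd
  constructor
  · intro n hn he
    obtain ⟨m, rfl⟩ : ∃ m, n = 2*m + 2 := by
      obtain ⟨k, hk⟩ := he; exact ⟨k - 1, by omega⟩
    have := final_even A hA _ (key m).2
    have h4 : ‖((f^[2*m+2] 0 - a : ℚ) : ℚ_[2])‖ = (2:ℝ)^(-(2:ℤ)) := by
      rw [this]; norm_num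
    exact val_of_norm _ 2 h4
  · intro n hn ho
    obtain ⟨m, rfl⟩ : ∃ m, n = 2*m + 1 := by
      obtain ⟨k, hk⟩ := ho; exact ⟨k, by omega⟩
    have := final_odd _ (key m).1
    have h4 : ‖((f^[2*m+1] 0 - a : ℚ) : ℚ_[2])‖ = (2:ℝ)^(-(0:ℤ)) := by
      rw [this]; norm_num
    exact val_of_norm _ 0 h4
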